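/- Let (X, Y) be a jointly Gaussian random vector in ℝ² with nondegenerate covariance (i.e., both marginal variances positive). If there exist real constants α ≠ 0, β, γ, δ such that αXY + βX + γY + δ = 0 almost surely, then the covariance matrix of (X, Y) is singular — a contradiction; hence no such relation can hold. Equivalently: for a nondegenerate jointly Gaussian (X,Y), the random variable αXY + βX + γY + δ with α ≠ 0 is almost surely nonconstant. -/
import Mathlib


open MeasureTheory ProbabilityTheory

instance : (gaussianReal 0 1).IsOpenPosMeasure := by
  constructor
  intro U hU hne h0
  exact hU.measure_ne_zero volume hne ((gaussianReal_absolutelyContinuous' 0 one_ne_zero) h0)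

/-- For a nondegenerate jointly Gaussian pair `(X, Y)` (here realized as linear
combinations of two independent standard Gaussians, with both marginal variances
positive), the random variable `α·X·Y + β·X + γ·Y + δ` with `α ≠ 0` cannot be
almost surely equal to `0`; equivalently no such affine-in-the-product relation
can hold almost surely. -/
theorem stmt_2 {Ω : Type*} [MeasureSpace Ω] [IsProbabilityMeasure (ℙ : Measure Ω)]
    (Z₁ Z₂ : Ω → ℝ) (hZ₁m : Measurable Z₁) (hZ₂m : Measurable Z₂)
    (hZ₁ : Measure.map Z₁ ℙ = gaussianReal 0 1)
    (hZ₂ : Measure.map Z₂ ℙ = gaussianReal 0 1)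
    (hindep : IndepFun Z₁ Z₂ ℙ)
    (a₁ a₂ b₁ b₂ m₁ m₂ : ℝ)
    (X : Ω → ℝ) (hX : ∀ ω, X ω = a₁ * Z₁ ω + a₂ * Z₂ ω + m₁)
    (Y : Ω → ℝ) (hY : ∀ ω, Y ω = b₁ * Z₁ ω + b₂ * Z₂ ω + m₂)
    (hVarX : 0 < a₁ ^ 2 + a₂ ^ 2)  -- Var X > 0
    (hVarY : 0 < b₁ ^ 2 + b₂ ^ 2)  -- Var Y > 0
    (α β γ δ : ℝ) (hα : α ≠ 0) :
    ¬ (∀ᵐ ω ∂(ℙ : Measure Ω), α * X ω * Y ω + β * X ω + γ * Y ω + δ = 0) := by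
  intro h
  set p : ℝ × ℝ → ℝ := fun z =>
    α * (a₁ * z.1 + a₂ * z.2 + m₁) * (b₁ * z.1 + b₂ * z.2 + m₂)
      + β * (a₁ * z.1 + a₂ * z.2 + m₁) + γ * (b₁ * z.1 + b₂ * z.2 + m₂) + δ with hp
  have hpcont : Continuous p := by fun_prop
  have hT : Measurable (fun ω => (Z₁ ω, Z₂ ω)) := hZ₁m.prodMk hZ₂m
  have hmap : Measure.map (fun ω => (Z₁ ω, Z₂ ω)) ℙ
      = (gaussianReal 0 1).prod (gaussianReal 0 1) := by
    rw [(indepFun_iff_map_prod_eq_prod_map_map hZ₁m.aemeasurable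
      hZ₂m.aemeasurable).mp hindep, hZ₁, hZ₂]
  have h' : ∀ᵐ ω ∂(ℙ : Measure Ω), p (Z₁ ω, Z₂ ω) = 0 := by
    filter_upwards [h] with ω hω
    simpa [hp, hX ω, hY ω] using hω
  have h'' : ∀ᵐ z ∂((gaussianReal 0 1).prod (gaussianReal 0 1)), p z = 0 := by
    rw [← hmap]
    rw [ae_map_iff hT.aemeasurable (by exact measurableSet_eq_fun hpcont.measurable measurable_const)]
    exact h'
  -- the nonzero set of p is open with measure zero, hence empty
  have hzero : ∀ z, p z = 0 := by
    by_contra hne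
    push_neg at hne
    obtain ⟨z₀, hz₀⟩ := hne
    have hopen : IsOpen {z : ℝ × ℝ | p z ≠ 0} := isOpen_ne_fun hpcont continuous_const
    have hpos : 0 < ((gaussianReal 0 1).prod (gaussianReal 0 1)) {z : ℝ × ℝ | p z ≠ 0} :=
      hopen.measure_pos _ ⟨z₀, hz₀⟩
    have : ((gaussianReal 0 1).prod (gaussianReal 0 1)) {z : ℝ × ℝ | p z ≠ 0} = 0 := by
      simpa using ae_iff.mp h''
    simp [this] at hpos
  -- extract coefficient identities
  have e0 := hzero (0, 0)
  have e1 := hzero (1, 0)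
  have e2 := hzero (-1, 0)
  have e3 := hzero (0, 1)
  have e4 := hzero (0, -1)
  have e5 := hzero (1, 1)
  have e6 := hzero (-1, -1)
  simp only [hp] at e0 e1 e2 e3 e4 e5 e6
  have c1 : α * (a₁ * b₁) = 0 := by linear_combination (e1 + e2 - 2 * e0) / 2
  have c2 : α * (a₂ * b₂) = 0 := by linear_combination (e3 + e4 - 2 * e0) / 2
  have c3 : α * (a₁ * b₂ + a₂ * b₁) = 0 := by
    linear_combination (e5 + e6 - 2 * e0) / 2 - c1 - c2
  have h1 : a₁ * b₁ = 0 := by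
    rcases mul_eq_zero.mp c1 with h | h; · exact absurd h hα
    exact h
  have h2 : a₂ * b₂ = 0 := by
    rcases mul_eq_zero.mp c2 with h | h; · exact absurd h hα
    exact h
  have h3 : a₁ * b₂ + a₂ * b₁ = 0 := by
    rcases mul_eq_zero.mp c3 with h | h; · exact absurd h hα
    exact h
  have key : (a₁ ^ 2 + a₂ ^ 2) * (b₁ ^ 2 + b₂ ^ 2)
      = (a₁ * b₁) ^ 2 + (a₂ * b₂) ^ 2 + (a₁ * b₂ + a₂ * b₁) ^ 2
        - 2 * ((a₁ * b₁) * (a₂ * b₂)) := by ring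
  have := mul_pos hVarX hVarY
  rw [key, h1, h2, h3] at this
  norm_num at this
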